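/- For any covector X of a COM (U, L) and any tope Y of L, the composition X∘Y is a tope lying in the face F(X), and X∘Y is the gate of Y in the smallest subcube C(X) of {±1}^U containing F(X); consequently every face F(X) is a gated subgraph of the tope graph of L. -/

import Mathlib

open Finset
open scoped Classical

variable {U : Type*}

/-- Hamming distance between two vertices of the hypercube `U → Bool`. -/
def hDist [Fintype U] [DecidableEq U] (x y : U → Bool) : ℕ :=
  (Finset.univ.filter fun i => x i ≠ y i).card

/-- The hypercube graph on `U → Bool`: two vertices are adjacent iff they differ
in exactly one coordinate. -/
def cubeGraph (U : Type*) [Fintype U] [DecidableEq U] : SimpleGraph (U → Bool) where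
  Adj x y := hDist x y = 1
  symm := by
    constructor
    intro x y h
    have hs : (Finset.univ.filter fun i => y i ≠ x i) =
        (Finset.univ.filter fun i => x i ≠ y i) := by
      apply Finset.filter_congr
      intro i _
      exact ne_comm
    simpa [hDist, hs] using h
  loopless := by
    constructor
    intro x h
    simp [hDist] at h

/-- Distance between `x` and `y` inside the subgraph of the hypercube induced by `A`
(`0` if one of them is not in `A`). -/
noncomputable def dIn [Fintype U] [DecidableEq U] (A : Set (U → Bool)) (x y : U → Bool) : ℕ :=
  if h : x ∈ A ∧ y ∈ A then ((cubeGraph U).induce A).dist ⟨x, h.1⟩ ⟨y, h.2⟩ else 0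

/-- A set of vertices of the hypercube is a partial cube if its induced graph is connected
and the induced graph distance coincides with the Hamming distance
(i.e. it is an isometric subgraph of the hypercube). -/
def IsPartialCube [Fintype U] [DecidableEq U] (A : Set (U → Bool)) : Prop :=
  ((cubeGraph U).induce A).Connected ∧ ∀ x ∈ A, ∀ y ∈ A, dIn A x y = hDist x y

/-- `A` shatters the coordinate set `X`. -/
def Shatters [Fintype U] [DecidableEq U] (A : Set (U → Bool)) (X : Finset U) : Prop :=
  ∀ g : U → Bool, ∃ a ∈ A, ∀ i ∈ X, a i = g i

/-- `A` strongly shatters `X`: it contains a full subcube over the coordinates `X`. -/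
def StronglyShatters [Fintype U] [DecidableEq U] (A : Set (U → Bool)) (X : Finset U) : Prop :=
  ∃ a : U → Bool, ∀ g : U → Bool, (fun i => if i ∈ X then g i else a i) ∈ A

/-- An ample set family: every shattered set is strongly shattered. -/
def IsAmple [Fintype U] [DecidableEq U] (A : Set (U → Bool)) : Prop :=
  ∀ X : Finset U, Shatters A X → StronglyShatters A X

/-- Composition of sign vectors: `(X ∘ Y) e = X e` if `X e ≠ 0`, else `Y e`. -/
def comp (X Y : U → SignType) : U → SignType := fun e => if X e = 0 then Y e else X e

/-- The support of a sign vector. -/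
def supp (X : U → SignType) : Set U := {e | X e ≠ 0}

/-- The separator of two sign vectors. -/
def sep [Fintype U] [DecidableEq U] (X Y : U → SignType) : Finset U :=
  Finset.univ.filter fun e => X e * Y e = -1

/-- A complex of oriented matroids: face symmetry and strong elimination. -/
structure IsCOM (L : Set (U → SignType)) : Prop where
  fs : ∀ X ∈ L, ∀ Y ∈ L, comp X (-Y) ∈ L
  se : ∀ X ∈ L, ∀ Y ∈ L, ∀ e : U, X e * Y e = -1 →
      ∃ Z ∈ L, Z e = 0 ∧ ∀ f : U, X f * Y f ≠ -1 → Z f = comp X Y f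

/-- An oriented matroid: composition, strong elimination and symmetry. -/
structure IsOM (L : Set (U → SignType)) : Prop where
  c : ∀ X ∈ L, ∀ Y ∈ L, comp X Y ∈ L
  se : ∀ X ∈ L, ∀ Y ∈ L, ∀ e : U, X e * Y e = -1 →
      ∃ Z ∈ L, Z e = 0 ∧ ∀ f : U, X f * Y f ≠ -1 → Z f = comp X Y f
  sym : ∀ X ∈ L, -X ∈ L

/-- A simple system of sign vectors. -/
def SimpleSV (L : Set (U → SignType)) : Prop :=
  (∀ e : U, ∀ s : SignType, ∃ X ∈ L, X e = s) ∧
  ∀ e f : U, e ≠ f → (∃ X ∈ L, X e * X f = 1) ∧ (∃ Y ∈ L, Y e * Y f = -1)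

/-- The topes of a system of sign vectors: the covectors with full support. -/
def Topes (L : Set (U → SignType)) : Set (U → SignType) := {X ∈ L | ∀ e, X e ≠ 0}

/-- Conversion of a (full support) sign vector to a vertex of the hypercube. -/
def tb (X : U → SignType) : U → Bool := fun e => decide (X e = 1)

/-- The vertex set of the tope graph inside the hypercube. -/
def TopeSet (L : Set (U → SignType)) : Set (U → Bool) := tb '' Topes L

/-- The face of a covector `X`. -/
def face (L : Set (U → SignType)) (X : U → SignType) : Set (U → SignType) :=
  {Z | ∃ Y ∈ L, Z = comp X Y}

section AuxStmt10

variable [Fintype U] [DecidableEq U]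

set_option linter.unusedSectionVars false

lemma sgn_mul_neg_iff : ∀ a b : SignType, a ≠ 0 → b ≠ 0 → (a * b = -1 ↔ a ≠ b) := by decide

lemma sgn_eq_neg : ∀ a b : SignType, a ≠ 0 → b ≠ 0 → a ≠ b → b = -a := by decide

lemma sgn_mem_pair : ∀ s a : SignType, s ≠ 0 → a ≠ 0 → s = a ∨ s = -a := by decide

lemma sgn_decide : ∀ a b : SignType, a ≠ 0 → b ≠ 0 → ((a = 1 ↔ b = 1) ↔ a = b) := by decide

lemma sgn_mul_cases : ∀ a b : SignType, a ≠ 0 → b ≠ 0 → a * b = 1 ∨ a * b = -1 := by decide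

lemma sgn_neg_mul_ne : ∀ a b : SignType, a ≠ 0 → b ≠ 0 → -(a*b) ≠ a*b := by decide

lemma sgn_neg_ne_zero : ∀ a : SignType, a ≠ 0 → -a ≠ 0 := by decide

lemma sgn_neg_mul_ne_zero : ∀ a b : SignType, a ≠ 0 → b ≠ 0 → -(a*b) ≠ 0 := by decide

lemma comp_apply (X Y : U → SignType) (e : U) : comp X Y e = if X e = 0 then Y e else X e := rfl

/-- For topes, Hamming distance of the boolean images is the number of sign disagreements. -/
lemma hDist_tb {T T' : U → SignType} (hT : ∀ e, T e ≠ 0) (hT' : ∀ e, T' e ≠ 0) :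
    hDist (tb T) (tb T') = (Finset.univ.filter fun e => T e ≠ T' e).card := by
  unfold hDist
  congr 1
  apply Finset.filter_congr
  intro i _
  have h := sgn_decide (T i) (T' i) (hT i) (hT' i)
  simp only [tb, ne_eq, decide_eq_decide]
  exact not_congr h

/-- Betweenness gives additivity of the Hamming distance. -/
lemma hDist_add {x y z : U → Bool} (h : ∀ i, y i = x i ∨ y i = z i) :
    hDist x z = hDist x y + hDist y z := by
  have hset : (Finset.univ.filter fun i => x i ≠ z i) =
      (Finset.univ.filter fun i => x i ≠ y i) ∪ (Finset.univ.filter fun i => y i ≠ z i) := by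
    ext i
    simp only [Finset.mem_filter, Finset.mem_union, Finset.mem_univ, true_and]
    rcases h i with h1 | h1 <;> rw [h1] <;> tauto
  have hdisj : Disjoint (Finset.univ.filter fun i => x i ≠ y i)
      (Finset.univ.filter fun i => y i ≠ z i) := by
    rw [Finset.disjoint_left]
    intro i hi hj
    simp only [Finset.mem_filter, Finset.mem_univ, true_and] at hi hj
    rcases h i with h1 | h1
    · exact hi h1.symm
    · exact hj h1
  rw [hDist, hDist, hDist, hset, Finset.card_union_of_disjoint hdisj]

lemma hDist_triangle (x y z : U → Bool) : hDist x z ≤ hDist x y + hDist y z := by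
  have hsub : (Finset.univ.filter fun i => x i ≠ z i) ⊆
      (Finset.univ.filter fun i => x i ≠ y i) ∪ (Finset.univ.filter fun i => y i ≠ z i) := by
    intro i hi
    simp only [Finset.mem_filter, Finset.mem_union, Finset.mem_univ, true_and] at hi ⊢
    by_cases h1 : x i = y i
    · right; rw [← h1]; exact hi
    · left; exact h1
  exact le_trans (Finset.card_le_card hsub) (Finset.card_union_le _ _)

/-- Every walk in an induced subgraph of the cube has length at least the Hamming distance. -/
lemma hDist_le_walk_length {A : Set (U → Bool)} {a b : ↥A}
    (p : ((cubeGraph U).induce A).Walk a b) : hDist a.1 b.1 ≤ p.length := by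
  induction p with
  | nil => simp [hDist]
  | @cons u v w hadj q ih =>
      have h1 : hDist u.1 v.1 = 1 := hadj
      calc hDist u.1 w.1 ≤ hDist u.1 v.1 + hDist v.1 w.1 := hDist_triangle _ _ _
        _ ≤ 1 + q.length := by rw [h1]; omega
        _ = (SimpleGraph.Walk.cons hadj q).length := by simp [SimpleGraph.Walk.length_cons]; omega

lemma comp_mem {L : Set (U → SignType)} (h : IsCOM L) {X Y : U → SignType}
    (hX : X ∈ L) (hY : Y ∈ L) : comp X Y ∈ L := by
  have h2 := h.fs X hX _ (h.fs X hX Y hY)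
  have heq : comp X (-(comp X (-Y))) = comp X Y := by
    funext e
    by_cases hx : X e = 0 <;> simp [comp, hx]
  rwa [heq] at h2

lemma comp_topes {L : Set (U → SignType)} (h : IsCOM L) {X Y : U → SignType}
    (hX : X ∈ L) (hY : Y ∈ Topes L) : comp X Y ∈ Topes L := by
  refine ⟨comp_mem h hX hY.1, fun e => ?_⟩
  unfold comp
  split
  · exact hY.2 e
  · assumption

/-- Main lemma: between any two topes there is a walk in the tope graph of length at most
their Hamming distance. -/
lemma exists_short_walk {L : Set (U → SignType)} (hcom : IsCOM L) (hsimple : SimpleSV L) :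
    ∀ n : ℕ, ∀ T T' : U → SignType, ∀ hT : T ∈ Topes L, ∀ hT' : T' ∈ Topes L,
    (Finset.univ.filter fun g => T g ≠ T' g).card = n →
    ∃ p : ((cubeGraph U).induce (TopeSet L)).Walk ⟨tb T, ⟨T, hT, rfl⟩⟩ ⟨tb T', ⟨T', hT', rfl⟩⟩,
      p.length ≤ n := by
  intro n
  induction n using Nat.strong_induction_on with
  | _ n IH =>
  intro T T' hT hT' hcard
  by_cases h0 : (Finset.univ.filter fun g => T g ≠ T' g).card = 0
  · -- T = T'
    have : T = T' := by
      funext g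
      by_contra hg
      have : g ∈ Finset.univ.filter fun g => T g ≠ T' g := by
        simp [hg]
      rw [Finset.card_eq_zero.mp h0] at this
      exact absurd this (Finset.notMem_empty g)
    subst this
    exact ⟨SimpleGraph.Walk.nil.copy rfl (Subtype.ext rfl), by simp⟩
  -- key step: a tope strictly between T and T' lets us recurse
  have key : ∀ M : U → SignType, ∀ hM : M ∈ Topes L, (∀ g, M g = T g ∨ M g = T' g) →
      M ≠ T → M ≠ T' →
      ∃ p : ((cubeGraph U).induce (TopeSet L)).Walk ⟨tb T, ⟨T, hT, rfl⟩⟩ ⟨tb T', ⟨T', hT', rfl⟩⟩,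
        p.length ≤ n := by
    intro M hM hbtw hMT hMT'
    set a := (Finset.univ.filter fun g => T g ≠ M g).card with ha
    set b := (Finset.univ.filter fun g => M g ≠ T' g).card with hb
    have hunion : (Finset.univ.filter fun g => T g ≠ T' g) =
        (Finset.univ.filter fun g => T g ≠ M g) ∪ (Finset.univ.filter fun g => M g ≠ T' g) := by
      ext g
      simp only [Finset.mem_filter, Finset.mem_union, Finset.mem_univ, true_and]
      rcases hbtw g with h1 | h1 <;> rw [h1] <;> tauto
    have hdisj : Disjoint (Finset.univ.filter fun g => T g ≠ M g)
        (Finset.univ.filter fun g => M g ≠ T' g) := by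
      rw [Finset.disjoint_left]
      intro g hg1 hg2
      simp only [Finset.mem_filter, Finset.mem_univ, true_and] at hg1 hg2
      rcases hbtw g with h1 | h1
      · exact hg1 h1.symm
      · exact hg2 h1
    have hab : a + b = n := by
      rw [ha, hb, ← Finset.card_union_of_disjoint hdisj, ← hunion, hcard]
    have hapos : 1 ≤ a := by
      rcases Function.ne_iff.mp (Ne.symm hMT) with ⟨g, hg⟩
      have : g ∈ Finset.univ.filter fun g => T g ≠ M g := by simp [hg]
      have := Finset.card_pos.mpr ⟨g, this⟩
      omega
    have hbpos : 1 ≤ b := by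
      rcases Function.ne_iff.mp hMT' with ⟨g, hg⟩
      have : g ∈ Finset.univ.filter fun g => M g ≠ T' g := by simp [hg]
      have := Finset.card_pos.mpr ⟨g, this⟩
      omega
    obtain ⟨p1, hp1⟩ := IH a (by omega) T M hT hM rfl
    obtain ⟨p2, hp2⟩ := IH b (by omega) M T' hM hT' rfl
    refine ⟨p1.append p2, ?_⟩
    rw [SimpleGraph.Walk.length_append]
    omega
  have hpos : 0 < (Finset.univ.filter fun g => T g ≠ T' g).card := Nat.pos_of_ne_zero h0
  obtain ⟨e, he⟩ := Finset.card_pos.mp hpos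
  have heD : T e ≠ T' e := by
    simpa using (Finset.mem_filter.mp he).2
  by_cases h1 : (Finset.univ.filter fun g => T g ≠ T' g).card = 1
  · -- adjacent case
    have hadj : ((cubeGraph U).induce (TopeSet L)).Adj ⟨tb T, ⟨T, hT, rfl⟩⟩ ⟨tb T', ⟨T', hT', rfl⟩⟩ := by
      show hDist (tb T) (tb T') = 1
      rw [hDist_tb hT.2 hT'.2]
      exact h1
    exact ⟨SimpleGraph.Walk.cons hadj SimpleGraph.Walk.nil, by simp; omega⟩
  -- now card ≥ 2
  have hn2 : 2 ≤ n := by omega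
  have hprod : T e * T' e = -1 := (sgn_mul_neg_iff _ _ (hT.2 e) (hT'.2 e)).mpr heD
  obtain ⟨Z, hZ, hZe, hZf⟩ := hcom.se T hT.1 T' hT'.1 e hprod
  have hZoff : ∀ f, T f = T' f → Z f = T f := by
    intro f hf
    have hne : T f * T' f ≠ -1 := by
      intro hc
      exact ((sgn_mul_neg_iff _ _ (hT.2 f) (hT'.2 f)).mp hc) hf
    have := hZf f hne
    rw [this, comp, if_neg (hT.2 f)]
  -- the tope W = Z ∘ (−T)
  set W := comp Z (-T) with hWdef
  have hWL : W ∈ L := hcom.fs Z hZ T hT.1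
  have hWtope : W ∈ Topes L := by
    refine ⟨hWL, fun f => ?_⟩
    rw [hWdef, comp_apply]
    split
    · exact sgn_neg_ne_zero _ (hT.2 f)
    · assumption
  have hWbtw : ∀ g, W g = T g ∨ W g = T' g := by
    intro g
    by_cases hg : T g = T' g
    · left
      rw [hWdef, comp, if_neg]
      · rw [hZoff g hg]
      · rw [hZoff g hg]; exact hT.2 g
    · have hT'g : T' g = -(T g) := sgn_eq_neg _ _ (hT.2 g) (hT'.2 g) hg
      have := sgn_mem_pair (W g) (T g) (hWtope.2 g) (hT.2 g)
      rcases this with h | h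
      · left; exact h
      · right; rw [h, hT'g]
  have hWe : W e = T' e := by
    rw [hWdef, comp, if_pos hZe]
    simp [sgn_eq_neg _ _ (hT.2 e) (hT'.2 e) heD]
  have hWneT : W ≠ T := by
    intro h
    rw [h] at hWe
    exact heD hWe
  by_cases hWT' : W ≠ T'
  · exact key W hWtope hWbtw hWneT hWT'
  push_neg at hWT'
  -- W = T'; try W' = Z ∘ (−T')
  set W' := comp Z (-T') with hW'def
  have hW'L : W' ∈ L := hcom.fs Z hZ T' hT'.1
  have hW'tope : W' ∈ Topes L := by
    refine ⟨hW'L, fun f => ?_⟩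
    rw [hW'def, comp_apply]
    split
    · exact sgn_neg_ne_zero _ (hT'.2 f)
    · assumption
  have hW'btw : ∀ g, W' g = T g ∨ W' g = T' g := by
    intro g
    by_cases hg : T g = T' g
    · right
      rw [hW'def, comp, if_neg]
      · rw [hZoff g hg, hg]
      · rw [hZoff g hg]; exact hT.2 g
    · have hTg : T g = -(T' g) := sgn_eq_neg _ _ (hT'.2 g) (hT.2 g) (Ne.symm hg)
      rcases sgn_mem_pair (W' g) (T' g) (hW'tope.2 g) (hT'.2 g) with h | h
      · right; exact h
      · left; rw [h, hTg]
  have hW'e : W' e = T e := by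
    rw [hW'def, comp, if_pos hZe]
    have := sgn_eq_neg _ _ (hT'.2 e) (hT.2 e) (Ne.symm heD)
    simp [this]
  have hW'neT' : W' ≠ T' := by
    intro h
    rw [h] at hW'e
    exact heD hW'e.symm
  by_cases hW'T : W' ≠ T
  · exact key W' hW'tope hW'btw hW'T hW'neT'
  push_neg at hW'T
  -- doubly degenerate case: Z vanishes on the separator
  have hZD : ∀ g, T g ≠ T' g → Z g = 0 := by
    intro g hg
    by_contra hZg
    have h1 : W g = Z g := by rw [hWdef, comp, if_neg hZg]
    have h2 : W' g = Z g := by rw [hW'def, comp, if_neg hZg]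
    rw [hWT'] at h1
    rw [hW'T] at h2
    exact hg (h2.trans h1.symm)
  -- pick a second separating coordinate f
  obtain ⟨f, hf, hfe⟩ := Finset.exists_mem_ne (s := Finset.univ.filter fun g => T g ≠ T' g) (by omega) e
  have hfD : T f ≠ T' f := by
    simpa using (Finset.mem_filter.mp hf).2
  obtain ⟨⟨V1, hV1, hV1p⟩, ⟨V2, hV2, hV2p⟩⟩ := hsimple.2 e f (Ne.symm hfe)
  -- choose V with V e * V f = −(T e * T f)
  obtain ⟨V, hVL, hVp⟩ : ∃ V ∈ L, V e * V f = -(T e * T f) := by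
    rcases sgn_mul_cases (T e) (T f) (hT.2 e) (hT.2 f) with h | h
    · exact ⟨V2, hV2, by rw [h, hV2p]⟩
    · refine ⟨V1, hV1, by rw [h, hV1p]; rfl⟩
  have hVe : V e ≠ 0 := by
    intro h
    rw [h, zero_mul] at hVp
    exact sgn_neg_mul_ne_zero (T e) (T f) (hT.2 e) (hT.2 f) hVp.symm
  have hVf : V f ≠ 0 := by
    intro h
    rw [h, mul_zero] at hVp
    exact sgn_neg_mul_ne_zero (T e) (T f) (hT.2 e) (hT.2 f) hVp.symm
  set P := comp Z V with hPdef
  have hPL : P ∈ L := comp_mem hcom hZ hVL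
  set Q := comp P T with hQdef
  have hQtope : Q ∈ Topes L := comp_topes hcom hPL hT
  have hQbtw : ∀ g, Q g = T g ∨ Q g = T' g := by
    intro g
    by_cases hg : T g = T' g
    · left
      have hZg : Z g = T g := hZoff g hg
      have hZg0 : Z g ≠ 0 := by rw [hZg]; exact hT.2 g
      have hPg : P g = Z g := by rw [hPdef, comp_apply, if_neg hZg0]
      have hPg0 : P g ≠ 0 := by rw [hPg]; exact hZg0
      rw [hQdef, comp_apply, if_neg hPg0, hPg, hZg]
    · have hT'g : T' g = -(T g) := sgn_eq_neg _ _ (hT.2 g) (hT'.2 g) hg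
      rcases sgn_mem_pair (Q g) (T g) (hQtope.2 g) (hT.2 g) with h | h
      · left; exact h
      · right; rw [h, hT'g]
  have hPe : P e = V e := by rw [hPdef, comp_apply, if_pos (hZD e heD)]
  have hPf : P f = V f := by rw [hPdef, comp_apply, if_pos (hZD f hfD)]
  have hQe : Q e = V e := by
    rw [hQdef, comp_apply, if_neg (by rw [hPe]; exact hVe), hPe]
  have hQf : Q f = V f := by
    rw [hQdef, comp_apply, if_neg (by rw [hPf]; exact hVf), hPf]
  have hQneT : Q ≠ T := by
    intro h
    have : V e * V f = T e * T f := by rw [← hQe, ← hQf, h]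
    rw [hVp] at this
    exact sgn_neg_mul_ne (T e) (T f) (hT.2 e) (hT.2 f) this
  have hQneT' : Q ≠ T' := by
    intro h
    have hTe' : T' e = -(T e) := sgn_eq_neg _ _ (hT.2 e) (hT'.2 e) heD
    have hTf' : T' f = -(T f) := sgn_eq_neg _ _ (hT.2 f) (hT'.2 f) hfD
    have : V e * V f = T e * T f := by
      rw [← hQe, ← hQf, h, hTe', hTf']
      simp
    rw [hVp] at this
    exact sgn_neg_mul_ne (T e) (T f) (hT.2 e) (hT.2 f) this
  exact key Q hQtope hQbtw hQneT hQneT'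

/-- For topes, induced tope-graph distance equals Hamming distance. -/
lemma dIn_topes_eq {L : Set (U → SignType)} (hcom : IsCOM L) (hsimple : SimpleSV L)
    {T T' : U → SignType} (hT : T ∈ Topes L) (hT' : T' ∈ Topes L) :
    dIn (TopeSet L) (tb T) (tb T') = hDist (tb T) (tb T') := by
  have hm1 : tb T ∈ TopeSet L := ⟨T, hT, rfl⟩
  have hm2 : tb T' ∈ TopeSet L := ⟨T', hT', rfl⟩
  rw [dIn, dif_pos ⟨hm1, hm2⟩]
  obtain ⟨p, hp⟩ := exists_short_walk hcom hsimple _ T T' hT hT' rfl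
  apply le_antisymm
  · refine le_trans (SimpleGraph.dist_le p) ?_
    rw [hDist_tb hT.2 hT'.2]
    exact hp
  · have hr : ((cubeGraph U).induce (TopeSet L)).Reachable
        ⟨tb T, ⟨T, hT, rfl⟩⟩ ⟨tb T', ⟨T', hT', rfl⟩⟩ := ⟨p⟩
    obtain ⟨q, hq⟩ := hr.exists_walk_length_eq_dist
    have hlow := hDist_le_walk_length q
    rw [hq] at hlow
    exact hlow

/-- The gate property at the level of `dIn`. -/
lemma gate_eq {L : Set (U → SignType)} (hcom : IsCOM L) (hsimple : SimpleSV L)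
    {X : U → SignType} (hX : X ∈ L) {W : U → SignType} (hW : W ∈ Topes L)
    {Z : U → SignType} (hZ : Z ∈ Topes L) (hag : ∀ e, X e ≠ 0 → Z e = X e) :
    dIn (TopeSet L) (tb W) (tb Z) =
      dIn (TopeSet L) (tb W) (tb (comp X W)) + dIn (TopeSet L) (tb (comp X W)) (tb Z) := by
  have hG : comp X W ∈ Topes L := comp_topes hcom hX hW
  rw [dIn_topes_eq hcom hsimple hW hZ, dIn_topes_eq hcom hsimple hW hG,
    dIn_topes_eq hcom hsimple hG hZ]
  apply hDist_add
  intro i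
  by_cases hx : X i = 0
  · left
    simp [tb, comp, hx]
  · right
    have : comp X W i = Z i := by rw [comp, if_neg hx, hag i hx]
    simp [tb, this]

end AuxStmt10

/-- For a covector `X` and a tope `Y` of a (simple) COM, `X ∘ Y` is a tope
lying in the face `F(X)`, it is the gate of `Y` in the smallest cube `C(X)` containing
`F(X)` (whose topes are the topes agreeing with `X` on the support of `X`); consequently
every face `F(X)` is a gated subgraph of the tope graph. -/
theorem stmt10 [Fintype U] [DecidableEq U] (L : Set (U → SignType))
    (hcom : IsCOM L) (hsimple : SimpleSV L)
    (X : U → SignType) (hX : X ∈ L) (Y : U → SignType) (hY : Y ∈ Topes L) :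
    comp X Y ∈ Topes L ∧ comp X Y ∈ face L X ∧
    (∀ Z ∈ Topes L, (∀ e, X e ≠ 0 → Z e = X e) →
      dIn (TopeSet L) (tb Y) (tb Z) =
        dIn (TopeSet L) (tb Y) (tb (comp X Y)) +
          dIn (TopeSet L) (tb (comp X Y)) (tb Z)) ∧
    (∀ W ∈ Topes L, ∃ g ∈ Topes L, g ∈ face L X ∧
      ∀ Z ∈ Topes L, Z ∈ face L X →
        dIn (TopeSet L) (tb W) (tb Z) =
          dIn (TopeSet L) (tb W) (tb g) + dIn (TopeSet L) (tb g) (tb Z)) := by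
  refine ⟨comp_topes hcom hX hY, ⟨Y, hY.1, rfl⟩, ?_, ?_⟩
  · intro Z hZ hag
    exact gate_eq hcom hsimple hX hY hZ hag
  · intro W hW
    refine ⟨comp X W, comp_topes hcom hX hW, ⟨W, hW.1, rfl⟩, ?_⟩
    intro Z hZ hZface
    obtain ⟨Y', hY', rfl⟩ := hZface
    refine gate_eq hcom hsimple hX hW hZ ?_
    intro e he
    rw [comp, if_neg he]
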